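/- Let Φ = f + g with f : ℝ^d → ℝ convex with L-Lipschitz gradient and g : ℝ^d → ℝ continuous convex, let x⋆ be a minimizer of Φ, and let 0 < s ≤ 1/L. For the ISTA iterates x_k = x_{k−1} − s·G_s(x_{k−1}) starting from any x₀ ∈ ℝ^d, one has for every k ≥ 1: Φ(x_k) − Φ(x⋆) ≤ ‖x₀ − x⋆‖² / (2sk). -/

import Mathlib

open scoped RealInnerProductSpace

lemma line_hasDerivAt {d : ℕ} (f : EuclideanSpace ℝ (Fin d) → ℝ)
    (f' : EuclideanSpace ℝ (Fin d) → EuclideanSpace ℝ (Fin d))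
    (hf' : ∀ x, HasGradientAt f (f' x) x)
    (x v : EuclideanSpace ℝ (Fin d)) (t : ℝ) :
    HasDerivAt (fun t : ℝ => f (x + t • v)) ⟪f' (x + t • v), v⟫ t := by
  have h1 : HasDerivAt (fun t : ℝ => x + t • v) v t := by
    simpa using ((hasDerivAt_id t).smul_const v).const_add x
  have h2 := (hf' (x + t • v)).hasFDerivAt
  have := h2.comp_hasDerivAt t h1
  exact this

lemma convex_grad_ineq {d : ℕ} (f : EuclideanSpace ℝ (Fin d) → ℝ)
    (f' : EuclideanSpace ℝ (Fin d) → EuclideanSpace ℝ (Fin d))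
    (hfconv : ConvexOn ℝ Set.univ f)
    (hf' : ∀ x, HasGradientAt f (f' x) x)
    (x z : EuclideanSpace ℝ (Fin d)) :
    f x + ⟪f' x, z - x⟫ ≤ f z := by
  set v := z - x with hv
  have hline := line_hasDerivAt f f' hf' x v 0
  simp only [zero_smul, add_zero] at hline
  have hslope : Filter.Tendsto (fun t : ℝ => (f (x + t • v) - f x) / t)
      (nhdsWithin 0 (Set.Ioi 0)) (nhds ⟪f' x, v⟫) := by
    have := hline.hasDerivWithinAt (s := Set.Ioi (0:ℝ))
    have h2 := (hasDerivWithinAt_iff_tendsto_slope.1 this)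
    have h3 : nhdsWithin (0:ℝ) (Set.Ioi 0 \ {0}) = nhdsWithin 0 (Set.Ioi 0) := by
      congr 1
      ext t; simp (config := {contextual := true}) [ne_of_gt]
    rw [h3] at h2
    refine h2.congr (fun t => ?_)
    simp [slope_def_field, div_eq_inv_mul]
  have hbound : ∀ᶠ t in nhdsWithin (0:ℝ) (Set.Ioi 0),
      (f (x + t • v) - f x) / t ≤ f z - f x := by
    filter_upwards [Ioo_mem_nhdsGT_of_mem (Set.mem_Ico.2 ⟨le_refl (0:ℝ), zero_lt_one⟩)] with t ht
    obtain ⟨ht0, ht1⟩ := ht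
    have hcvx := hfconv.2 (Set.mem_univ x) (Set.mem_univ z)
      (show (0:ℝ) ≤ 1 - t by linarith) (show (0:ℝ) ≤ t from ht0.le)
      (show (1 - t) + t = 1 by ring)
    have heq : (1 - t) • x + t • z = x + t • v := by
      rw [hv]; module
    rw [heq] at hcvx
    rw [div_le_iff₀ ht0]
    simp only [smul_eq_mul] at hcvx; nlinarith
  have := le_of_tendsto hslope hbound
  linarith [this]

lemma descent_lemma {d : ℕ} (f : EuclideanSpace ℝ (Fin d) → ℝ)
    (f' : EuclideanSpace ℝ (Fin d) → EuclideanSpace ℝ (Fin d))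
    (L : ℝ) (hf' : ∀ x, HasGradientAt f (f' x) x)
    (hlip : ∀ x y, ‖f' x - f' y‖ ≤ L * ‖x - y‖)
    (x v : EuclideanSpace ℝ (Fin d)) :
    f (x + v) ≤ f x + ⟪f' x, v⟫ + L / 2 * ‖v‖ ^ 2 := by
  set h : ℝ → ℝ := fun t => f (x + t • v) - t * ⟪f' x, v⟫ - L * t ^ 2 / 2 * ‖v‖ ^ 2 with hh
  have hderiv : ∀ t : ℝ, HasDerivAt h (⟪f' (x + t • v), v⟫ - ⟪f' x, v⟫ - L * t * ‖v‖ ^ 2) t := by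
    intro t
    have h1 := line_hasDerivAt f f' hf' x v t
    have h2 : HasDerivAt (fun t : ℝ => t * ⟪f' x, v⟫) ⟪f' x, v⟫ t := by
      simpa using (hasDerivAt_id t).mul_const ⟪f' x, v⟫
    have h3 : HasDerivAt (fun t : ℝ => L * t ^ 2 / 2 * ‖v‖ ^ 2) (L * t * ‖v‖ ^ 2) t := by
      have : HasDerivAt (fun t : ℝ => t ^ 2) (2 * t) t := by
        simpa using hasDerivAt_pow 2 t
      have := ((this.const_mul L).div_const 2).mul_const (‖v‖ ^ 2)
      rw [show L * t * ‖v‖ ^ 2 = L * (2 * t) / 2 * ‖v‖ ^ 2 by ring]; exact this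
    exact (h1.sub h2).sub h3
  have hmono : h 1 ≤ h 0 := by
    have := antitoneOn_of_deriv_nonpos (convex_Icc (0:ℝ) 1)
      (fun t ht => ((hderiv t).continuousAt).continuousWithinAt)
      (fun t ht => (hderiv t).differentiableAt.differentiableWithinAt) ?nonpos
      (Set.left_mem_Icc.2 zero_le_one) (Set.right_mem_Icc.2 zero_le_one) zero_le_one
    · exact this
    case nonpos =>
      intro t ht
      rw [interior_Icc] at ht
      rw [(hderiv t).deriv]
      have h1 : ⟪f' (x + t • v) - f' x, v⟫ ≤ ‖f' (x + t • v) - f' x‖ * ‖v‖ :=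
        real_inner_le_norm _ _
      have h2 : ‖f' (x + t • v) - f' x‖ ≤ L * (t * ‖v‖) := by
        have := hlip (x + t • v) x
        simpa [norm_smul, abs_of_pos ht.1] using this
      have hv : (0:ℝ) ≤ ‖v‖ := norm_nonneg _
      have : ⟪f' (x + t • v), v⟫ - ⟪f' x, v⟫ ≤ L * t * ‖v‖ ^ 2 := by
        calc ⟪f' (x + t • v), v⟫ - ⟪f' x, v⟫ = ⟪f' (x + t • v) - f' x, v⟫ := by
              rw [inner_sub_left]
          _ ≤ ‖f' (x + t • v) - f' x‖ * ‖v‖ := h1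
          _ ≤ L * (t * ‖v‖) * ‖v‖ := by nlinarith [norm_nonneg (f' (x + t•v) - f' x)]
          _ = L * t * ‖v‖ ^ 2 := by ring
      linarith
  have h0 : h 0 = f x := by simp [hh]
  have h1 : h 1 = f (x + v) - ⟪f' x, v⟫ - L / 2 * ‖v‖ ^ 2 := by
    simp [hh]
  rw [h0, h1] at hmono
  linarith


lemma prox_subgrad {d : ℕ} (g : EuclideanSpace ℝ (Fin d) → ℝ)
    (hgconv : ConvexOn ℝ Set.univ g)
    (s : ℝ) (hs : 0 < s) (u q : EuclideanSpace ℝ (Fin d))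
    (hq : IsMinOn (fun z => 1 / (2 * s) * ‖z - u‖ ^ 2 + g z) Set.univ q)
    (z : EuclideanSpace ℝ (Fin d)) :
    g q ≤ g z + s⁻¹ * ⟪q - u, z - q⟫ := by
  have key : ∀ t : ℝ, 0 < t → t < 1 →
      g q ≤ g z + s⁻¹ * ⟪q - u, z - q⟫ + t / (2 * s) * ‖z - q‖ ^ 2 := by
    intro t ht0 ht1
    have hmin := hq (Set.mem_univ ((1 - t) • q + t • z))
    simp only [Set.mem_setOf_eq] at hmin
    have hcvx := hgconv.2 (Set.mem_univ q) (Set.mem_univ z)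
      (show (0:ℝ) ≤ 1 - t by linarith) ht0.le (show (1 - t) + t = 1 by ring)
    simp only [smul_eq_mul] at hcvx
    have heq : (1 - t) • q + t • z - u = (q - u) + t • (z - q) := by module
    have hnorm : ‖(1 - t) • q + t • z - u‖ ^ 2
        = ‖q - u‖ ^ 2 + 2 * t * ⟪q - u, z - q⟫ + t ^ 2 * ‖z - q‖ ^ 2 := by
      rw [heq, norm_add_sq_real, real_inner_smul_right, norm_smul]
      simp [abs_of_pos ht0]
      ring
    have h2 : 1 / (2 * s) * ‖q - u‖ ^ 2 + g q
        ≤ 1 / (2 * s) * ‖(1 - t) • q + t • z - u‖ ^ 2 + ((1 - t) * g q + t * g z) :=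
      le_trans hmin (by linarith [hcvx])
    rw [hnorm] at h2
    have hs' : 0 < 2 * s := by linarith
    set I := ⟪q - u, z - q⟫ with hI
    set N := ‖z - q‖ ^ 2 with hN
    have e1 : 1 / (2 * s) * (2 * t * I + t ^ 2 * N)
        = t * (s⁻¹ * I) + t * (t / (2 * s) * N) := by
      field_simp
    have h4 : t * g q ≤ t * (g z + s⁻¹ * I + t / (2 * s) * N) := by nlinarith [h2, e1]
    exact le_of_mul_le_mul_left h4 ht0
  -- take t → 0+
  set A := g z + s⁻¹ * ⟪q - u, z - q⟫ with hA
  have htend : Filter.Tendsto (fun t : ℝ => A + t / (2 * s) * ‖z - q‖ ^ 2)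
      (nhdsWithin 0 (Set.Ioi 0)) (nhds A) := by
    have : Filter.Tendsto (fun t : ℝ => A + t / (2 * s) * ‖z - q‖ ^ 2) (nhds 0)
        (nhds (A + 0 / (2 * s) * ‖z - q‖ ^ 2)) := by
      apply Filter.Tendsto.add tendsto_const_nhds
      exact ((continuous_id.div_const _).mul continuous_const).tendsto 0
    simp at this
    exact this.mono_left nhdsWithin_le_nhds
  refine ge_of_tendsto htend ?_
  filter_upwards [Ioo_mem_nhdsGT_of_mem (Set.mem_Ico.2 ⟨le_refl (0:ℝ), zero_lt_one⟩)] with t ht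
  exact key t ht.1 ht.2


section aux
variable {d : ℕ}

lemma ista_key {d : ℕ}
    (f g : EuclideanSpace ℝ (Fin d) → ℝ)
    (f' : EuclideanSpace ℝ (Fin d) → EuclideanSpace ℝ (Fin d))
    (L s : ℝ) (hL : 0 < L) (hs : 0 < s)
    (hfconv : ConvexOn ℝ Set.univ f)
    (hf' : ∀ x, HasGradientAt f (f' x) x)
    (hlip : ∀ x y, ‖f' x - f' y‖ ≤ L * ‖x - y‖)
    (hgconv : ConvexOn ℝ Set.univ g)
    (Φ : EuclideanSpace ℝ (Fin d) → ℝ) (hΦ : ∀ x, Φ x = f x + g x)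
    (P : EuclideanSpace ℝ (Fin d) → EuclideanSpace ℝ (Fin d))
    (hP : ∀ x, IsMinOn (fun z => 1 / (2 * s) * ‖z - (x - s • f' x)‖ ^ 2 + g z) Set.univ (P x))
    (G : EuclideanSpace ℝ (Fin d) → EuclideanSpace ℝ (Fin d))
    (hG : ∀ x, G x = s⁻¹ • (x - P x))
    (hsL : s ≤ 1 / L)
    (y z : EuclideanSpace ℝ (Fin d)) :
    Φ (P y) ≤ Φ z + ⟪G y, y - z⟫ - s / 2 * ‖G y‖ ^ 2 := by
  have hs' : s ≠ 0 := ne_of_gt hs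
  have hLs : L * s ≤ 1 := by
    rw [le_div_iff₀ hL] at hsL; linarith
  have e1 : P y - y = -(s • G y) := by
    rw [hG, smul_smul, mul_inv_cancel₀ hs', one_smul]; abel
  have hdes := descent_lemma f f' L hf' hlip y (P y - y)
  rw [show y + (P y - y) = P y by abel] at hdes
  have hcvx := convex_grad_ineq f f' hfconv hf' y z
  have hprox := prox_subgrad g hgconv s hs (y - s • f' y) (P y) (hP y) z
  -- inner product identities
  have e2 : ‖P y - y‖ ^ 2 = s ^ 2 * ‖G y‖ ^ 2 := by
    rw [e1, norm_neg, norm_smul, Real.norm_eq_abs, abs_of_pos hs, mul_pow]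
  have e3 : ⟪f' y, P y - y⟫ = -(s * ⟪f' y, G y⟫) := by
    rw [e1, inner_neg_right, real_inner_smul_right]
  have e4 : P y - (y - s • f' y) = s • (f' y - G y) := by
    rw [smul_sub]
    rw [sub_eq_iff_eq_add] at e1
    rw [e1]; module
  have e6 : z - P y = (z - y) + s • G y := by
    rw [sub_eq_iff_eq_add] at e1
    rw [e1]; module
  have e5 : s⁻¹ * ⟪P y - (y - s • f' y), z - P y⟫
      = ⟪f' y, z - y⟫ + s * ⟪f' y, G y⟫ - ⟪G y, z - y⟫ - s * ‖G y‖ ^ 2 := by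
    rw [e4, real_inner_smul_left, inv_mul_cancel_left₀ hs', inner_sub_left, e6,
      inner_add_right, inner_add_right, real_inner_smul_right, real_inner_smul_right,
      real_inner_self_eq_norm_sq]
    ring
  have e7 : ⟪G y, y - z⟫ = -⟪G y, z - y⟫ := by
    rw [show y - z = -(z - y) by abel, inner_neg_right]
  rw [hΦ, hΦ]
  rw [e2, e3] at hdes
  rw [e5] at hprox
  rw [e7]
  have hfin : (L / 2) * (s ^ 2 * ‖G y‖ ^ 2) - s * ‖G y‖ ^ 2 ≤ - (s / 2 * ‖G y‖ ^ 2) := by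
    nlinarith [sq_nonneg ‖G y‖, mul_nonneg (mul_nonneg (sub_nonneg.2 hLs) hs.le) (sq_nonneg ‖G y‖)]
  linarith [hdes, hcvx, hprox, hfin]

end aux
/-- **ISTA objective-value convergence rate.** For any step size `0 < s ≤ 1/L`,
`Φ(x_k) − Φ(x⋆) ≤ ‖x₀ − x⋆‖²/(2sk)` for every `k ≥ 1`. -/
theorem ista_objective_rate {d : ℕ}
    (f g : EuclideanSpace ℝ (Fin d) → ℝ)
    (f' : EuclideanSpace ℝ (Fin d) → EuclideanSpace ℝ (Fin d))
    (L s : ℝ) (hL : 0 < L) (hs : 0 < s)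
    (hfconv : ConvexOn ℝ Set.univ f)
    (hf' : ∀ x, HasGradientAt f (f' x) x)
    (hlip : ∀ x y, ‖f' x - f' y‖ ≤ L * ‖x - y‖)
    (hgconv : ConvexOn ℝ Set.univ g) (hgcont : Continuous g)
    (Φ : EuclideanSpace ℝ (Fin d) → ℝ) (hΦ : ∀ x, Φ x = f x + g x)
    (P : EuclideanSpace ℝ (Fin d) → EuclideanSpace ℝ (Fin d))
    (hP : ∀ x, IsMinOn (fun z => 1 / (2 * s) * ‖z - (x - s • f' x)‖ ^ 2 + g z) Set.univ (P x))
    (G : EuclideanSpace ℝ (Fin d) → EuclideanSpace ℝ (Fin d))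
    (hG : ∀ x, G x = s⁻¹ • (x - P x))
    (xstar : EuclideanSpace ℝ (Fin d)) (hstar : IsMinOn Φ Set.univ xstar)
    (x : ℕ → EuclideanSpace ℝ (Fin d))
    (hx : ∀ k : ℕ, x (k + 1) = x k - s • G (x k))
    (hsL : s ≤ 1 / L) :
    ∀ k : ℕ, 1 ≤ k →
      Φ (x k) - Φ xstar ≤ ‖x 0 - xstar‖ ^ 2 / (2 * s * (k : ℝ)) := by
  have hs' : s ≠ 0 := ne_of_gt hs
  have key := ista_key f g f' L s hL hs hfconv hf' hlip hgconv Φ hΦ P hP G hG hsL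
  have hPx : ∀ k : ℕ, x (k + 1) = P (x k) := by
    intro k
    rw [hx, hG, smul_smul, mul_inv_cancel₀ hs', one_smul]
    abel
  have hdec : ∀ k : ℕ, Φ (x (k + 1)) ≤ Φ (x k) := by
    intro k
    have := key (x k) (x k)
    rw [← hPx k] at this
    simp only [sub_self, inner_zero_right] at this
    nlinarith [this, mul_nonneg hs.le (sq_nonneg ‖G (x k)‖)]
  have hstep : ∀ k : ℕ, Φ (x (k + 1)) - Φ xstar
      ≤ (‖x k - xstar‖ ^ 2 - ‖x (k + 1) - xstar‖ ^ 2) / (2 * s) := by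
    intro k
    have hkey := key (x k) xstar
    rw [← hPx k] at hkey
    have hid : ‖x (k + 1) - xstar‖ ^ 2
        = ‖x k - xstar‖ ^ 2 - 2 * s * ⟪G (x k), x k - xstar⟫ + s ^ 2 * ‖G (x k)‖ ^ 2 := by
      rw [hx, show x k - s • G (x k) - xstar = (x k - xstar) - s • G (x k) by abel,
        norm_sub_sq_real, real_inner_smul_right, norm_smul, Real.norm_eq_abs,
        abs_of_pos hs, mul_pow, real_inner_comm]
      ring
    rw [le_div_iff₀ (by linarith : (0:ℝ) < 2 * s)]
    nlinarith [hkey, hid]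
  have hsum : ∀ k : ℕ, (k : ℝ) * (Φ (x k) - Φ xstar)
      ≤ (‖x 0 - xstar‖ ^ 2 - ‖x k - xstar‖ ^ 2) / (2 * s) := by
    intro k
    induction k with
    | zero => simp
    | succ n ih =>
      have h1 : (n : ℝ) * (Φ (x (n + 1)) - Φ xstar) ≤ (n : ℝ) * (Φ (x n) - Φ xstar) :=
        mul_le_mul_of_nonneg_left (by linarith [hdec n]) (Nat.cast_nonneg n)
      have h2 := hstep n
      push_cast
      have : ((n : ℝ) + 1) * (Φ (x (n + 1)) - Φ xstar)
          = (n : ℝ) * (Φ (x (n + 1)) - Φ xstar) + (Φ (x (n + 1)) - Φ xstar) := by ring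
      rw [this]
      have hsplit : (‖x 0 - xstar‖ ^ 2 - ‖x (n + 1) - xstar‖ ^ 2) / (2 * s)
          = (‖x 0 - xstar‖ ^ 2 - ‖x n - xstar‖ ^ 2) / (2 * s)
            + (‖x n - xstar‖ ^ 2 - ‖x (n + 1) - xstar‖ ^ 2) / (2 * s) := by
        field_simp
        ring
      rw [hsplit]
      push_cast at ih
      linarith [h1, ih, h2]
  intro k hk
  have hk0 : (0:ℝ) < (k:ℝ) := by exact_mod_cast hk
  have h2s : (0:ℝ) < 2 * s := by linarith
  have := hsum k
  rw [le_div_iff₀ h2s] at this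
  rw [le_div_iff₀ (by positivity : (0:ℝ) < 2 * s * (k:ℝ))]
  nlinarith [this, sq_nonneg ‖x k - xstar‖]
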